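/- Let N = 2, let B be a ball with closure contained in the open right half-plane {(x,y) ∈ ℝ² : x > 0}, and let u(x,y) = arctan(y/x). Then for every (not necessarily convex) F ∈ C²((0,+∞)), setting DF(w) := F'(|w|)·w/|w| for w ≠ 0, the function u satisfies div(DF(Du)) = 0 pointwise in B; equivalently, the matrix D²F(Du(z))·D²u(z) has zero trace for every z ∈ B, where D²F(w) = F''(|w|)·(w/|w|)⊗(w/|w|) + (F'(|w|)/|w|)·(I − (w/|w|)⊗(w/|w|)). -/

import Mathlib

open MeasureTheory

/-- The angle function `u(x,y) = arctan(y/x)` on the right half-plane. -/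
noncomputable def angleFun (x : EuclideanSpace ℝ (Fin 2)) : ℝ :=
  Real.arctan (x 1 / x 0)

/-- The stress field `DF(Du)(z) = F'(|Du(z)|) Du(z)/|Du(z)|` associated to a radial
integrand `F` and to the function `u = arctan(y/x)`. -/
noncomputable def stressField (F : ℝ → ℝ) (z : EuclideanSpace ℝ (Fin 2)) :
    EuclideanSpace ℝ (Fin 2) :=
  (deriv F ‖gradient angleFun z‖ / ‖gradient angleFun z‖) • gradient angleFun z

namespace Stmt19Aux

/-- The rotation field `W v = (-v₁, v₀)` as a continuous linear map. -/
noncomputable def W : EuclideanSpace ℝ (Fin 2) →L[ℝ] EuclideanSpace ℝ (Fin 2) :=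
  ((EuclideanSpace.proj 1 : EuclideanSpace ℝ (Fin 2) →L[ℝ] ℝ).smulRight
      (EuclideanSpace.single 0 (-1 : ℝ))) +
  ((EuclideanSpace.proj 0 : EuclideanSpace ℝ (Fin 2) →L[ℝ] ℝ).smulRight
      (EuclideanSpace.single 1 (1 : ℝ)))

lemma W_apply (v : EuclideanSpace ℝ (Fin 2)) :
    W v = EuclideanSpace.single 0 (-(v 1)) + EuclideanSpace.single 1 (v 0) := by
  ext i
  fin_cases i <;>
    simp [W, EuclideanSpace.single_apply]

lemma W_norm (z : EuclideanSpace ℝ (Fin 2)) :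
    ‖W z‖ = Real.sqrt ((z 0)^2 + (z 1)^2) := by
  rw [W_apply, EuclideanSpace.norm_eq]
  congr 1
  simp [Fin.sum_univ_two, EuclideanSpace.single_apply, Real.norm_eq_abs, sq_abs]
  ring

lemma hasGradient_angleFun (z : EuclideanSpace ℝ (Fin 2)) (hx : z 0 ≠ 0) :
    HasGradientAt angleFun ((((z 0)^2 + (z 1)^2)⁻¹) • W z) z := by
  have h0 : HasFDerivAt (fun w : EuclideanSpace ℝ (Fin 2) => w 0)
      (EuclideanSpace.proj 0 : EuclideanSpace ℝ (Fin 2) →L[ℝ] ℝ) z :=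
    (EuclideanSpace.proj 0 : EuclideanSpace ℝ (Fin 2) →L[ℝ] ℝ).hasFDerivAt
  have h1 : HasFDerivAt (fun w : EuclideanSpace ℝ (Fin 2) => w 1)
      (EuclideanSpace.proj 1 : EuclideanSpace ℝ (Fin 2) →L[ℝ] ℝ) z :=
    (EuclideanSpace.proj 1 : EuclideanSpace ℝ (Fin 2) →L[ℝ] ℝ).hasFDerivAt
  have hinv : HasFDerivAt (fun w : EuclideanSpace ℝ (Fin 2) => (w 0)⁻¹)
      ((-((z 0)^2)⁻¹) • (EuclideanSpace.proj 0 : EuclideanSpace ℝ (Fin 2) →L[ℝ] ℝ)) z :=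
    (hasDerivAt_inv hx).comp_hasFDerivAt z h0
  have hdiv := h1.mul hinv
  have harc : HasDerivAt Real.arctan (1 / (1 + ((z 1) * (z 0)⁻¹)^2)) ((z 1) * (z 0)⁻¹) :=
    Real.hasDerivAt_arctan _
  have hcomp := harc.comp_hasFDerivAt z hdiv
  rw [hasGradientAt_iff_hasFDerivAt]
  have heq : angleFun =
      (fun w : EuclideanSpace ℝ (Fin 2) => Real.arctan (w 1 * (w 0)⁻¹)) := by
    funext w; rw [angleFun, div_eq_mul_inv]
  rw [heq]
  convert hcomp using 1
  · rfl
  · rfl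
  refine ContinuousLinearMap.ext fun v => ?_
  simp only [InnerProductSpace.toDual_apply_apply, ContinuousLinearMap.smul_apply,
    ContinuousLinearMap.add_apply, PiLp.proj_apply, smul_eq_mul,
    real_inner_smul_left, W_apply, inner_add_left, EuclideanSpace.inner_single_left,
    starRingEnd_apply, star_trivial]
  have hq : (z 0)^2 + (z 1)^2 ≠ 0 := by positivity
  have h2 : 1 + ((z 1) * (z 0)⁻¹)^2 ≠ 0 := by positivity
  field_simp

lemma grad_eq (z : EuclideanSpace ℝ (Fin 2)) (hx : z 0 ≠ 0) :
    gradient angleFun z = (((z 0)^2 + (z 1)^2)⁻¹) • W z :=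
  (hasGradient_angleFun z hx).gradient

lemma norm_grad (z : EuclideanSpace ℝ (Fin 2)) (hx : 0 < z 0) :
    ‖gradient angleFun z‖ = (Real.sqrt ((z 0)^2 + (z 1)^2))⁻¹ := by
  have hq : (0:ℝ) < (z 0)^2 + (z 1)^2 := by positivity
  rw [grad_eq z hx.ne', norm_smul, W_norm, Real.norm_eq_abs, abs_inv,
    abs_of_pos hq]
  rw [← Real.mul_self_sqrt hq.le]
  have hs : Real.sqrt ((z 0)^2 + (z 1)^2) ≠ 0 := by
    positivity
  field_simp
  rw [Real.sqrt_sq (Real.sqrt_nonneg _)]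

/-- The radial coefficient `s(t) = F'(t^{-1/2}) · t^{-1/2}`, so that
`stressField F z = s(|z|²) • W z`. -/
noncomputable def sAux (F : ℝ → ℝ) (t : ℝ) : ℝ :=
  deriv F ((Real.sqrt t)⁻¹) * (Real.sqrt t)⁻¹

lemma derivF_diff {F : ℝ → ℝ} (hF : ContDiffOn ℝ 2 F (Set.Ioi 0)) {t : ℝ} (ht : 0 < t) :
    DifferentiableAt ℝ (deriv F) t := by
  have h1 : ContDiffOn ℝ 1 (derivWithin F (Set.Ioi 0)) (Set.Ioi 0) :=
    hF.derivWithin (uniqueDiffOn_Ioi 0) (by norm_num)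
  have h2 : DifferentiableAt ℝ (derivWithin F (Set.Ioi 0)) t :=
    (h1.differentiableOn one_ne_zero).differentiableAt (isOpen_Ioi.mem_nhds ht)
  exact h2.congr_of_eventuallyEq <|
    (isOpen_Ioi.eventually_mem ht).mono fun s hs =>
      (derivWithin_of_isOpen isOpen_Ioi hs).symm

lemma sAux_diff {F : ℝ → ℝ} (hF : ContDiffOn ℝ 2 F (Set.Ioi 0)) {t : ℝ} (ht : 0 < t) :
    DifferentiableAt ℝ (sAux F) t := by
  have hsne : Real.sqrt t ≠ 0 := by positivity
  have hsq : DifferentiableAt ℝ (fun u : ℝ => (Real.sqrt u)⁻¹) t :=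
    (Real.hasDerivAt_sqrt ht.ne').differentiableAt.inv hsne
  have hd : DifferentiableAt ℝ (fun u : ℝ => deriv F ((Real.sqrt u)⁻¹)) t :=
    DifferentiableAt.comp (g := deriv F) t
      (derivF_diff hF (by positivity : (0:ℝ) < (Real.sqrt t)⁻¹)) hsq
  exact hd.mul hsq

lemma stress_eq (F : ℝ → ℝ) (z : EuclideanSpace ℝ (Fin 2)) (hx : 0 < z 0) :
    stressField F z = sAux F ((z 0)^2 + (z 1)^2) • W z := by
  have hq : (0:ℝ) < (z 0)^2 + (z 1)^2 := by positivity
  have hs : Real.sqrt ((z 0)^2 + (z 1)^2) ≠ 0 := by positivity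
  rw [stressField, sAux, norm_grad z hx, grad_eq z hx.ne', smul_smul]
  congr 1
  rw [div_inv_eq_mul, mul_assoc]
  congr 1
  rw [← Real.mul_self_sqrt hq.le]
  field_simp
  rw [Real.sqrt_sq (Real.sqrt_nonneg _)]

end Stmt19Aux

open Stmt19Aux in
/-- Let `B` be a ball whose closure is contained in the open right
half-plane `{x > 0} ⊂ ℝ²`, and let `u(x,y) = arctan(y/x)`. For every `F ∈ C²((0,∞))`
(not necessarily convex), setting `DF(w) = F'(|w|) w/|w|`, the field `V = DF(Du)` is
differentiable on `B` with `div V = 0` pointwise in `B` (equivalently, the matrix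
`D²F(Du) D²u` has zero trace on `B`). -/
theorem stmt19 (c : EuclideanSpace ℝ (Fin 2)) (r : ℝ) (hr : 0 < r)
    (hB : ∀ x ∈ Metric.closedBall c r, 0 < x 0)
    (F : ℝ → ℝ) (hF : ContDiffOn ℝ 2 F (Set.Ioi 0)) :
    ∀ z ∈ Metric.ball c r,
      DifferentiableAt ℝ (stressField F) z ∧
      ∑ i : Fin 2, fderiv ℝ (stressField F) z (EuclideanSpace.single i 1) i = 0 := by
  intro z hz
  have hz0 : 0 < z 0 := hB z (Metric.ball_subset_closedBall hz)
  set Q : EuclideanSpace ℝ (Fin 2) → ℝ := fun w => (w 0)^2 + (w 1)^2 with hQdef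
  have hQpos : 0 < Q z := by positivity
  -- derivative of Q
  have h0 : HasFDerivAt (fun w : EuclideanSpace ℝ (Fin 2) => w 0)
      (EuclideanSpace.proj 0 : EuclideanSpace ℝ (Fin 2) →L[ℝ] ℝ) z :=
    (EuclideanSpace.proj 0 : EuclideanSpace ℝ (Fin 2) →L[ℝ] ℝ).hasFDerivAt
  have h1 : HasFDerivAt (fun w : EuclideanSpace ℝ (Fin 2) => w 1)
      (EuclideanSpace.proj 1 : EuclideanSpace ℝ (Fin 2) →L[ℝ] ℝ) z :=
    (EuclideanSpace.proj 1 : EuclideanSpace ℝ (Fin 2) →L[ℝ] ℝ).hasFDerivAt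
  have hQ : HasFDerivAt Q
      ((z 0 • (EuclideanSpace.proj 0 : EuclideanSpace ℝ (Fin 2) →L[ℝ] ℝ) +
          z 0 • (EuclideanSpace.proj 0 : EuclideanSpace ℝ (Fin 2) →L[ℝ] ℝ)) +
        (z 1 • (EuclideanSpace.proj 1 : EuclideanSpace ℝ (Fin 2) →L[ℝ] ℝ) +
          z 1 • (EuclideanSpace.proj 1 : EuclideanSpace ℝ (Fin 2) →L[ℝ] ℝ))) z := by
    simp only [hQdef, pow_two]
    exact (h0.mul h0).add (h1.mul h1)
  have hs : HasDerivAt (sAux F) (deriv (sAux F) (Q z)) (Q z) :=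
    (sAux_diff hF hQpos).hasDerivAt
  have hsQ := hs.comp_hasFDerivAt z hQ
  have hT := hsQ.smul W.hasFDerivAt
  -- eventual equality
  have hmem : {w : EuclideanSpace ℝ (Fin 2) | 0 < w 0} ∈ nhds z := by
    refine (isOpen_lt continuous_const ?_).mem_nhds hz0
    exact (EuclideanSpace.proj 0 : EuclideanSpace ℝ (Fin 2) →L[ℝ] ℝ).continuous
  have hU : stressField F =ᶠ[nhds z] fun w => sAux F (Q w) • W w :=
    Filter.eventuallyEq_of_mem hmem fun w hw => stress_eq F w hw
  refine ⟨hT.differentiableAt.congr_of_eventuallyEq hU, ?_⟩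
  have hfd : fderiv ℝ (stressField F) z = _ := hU.fderiv_eq.trans hT.fderiv
  rw [hfd]
  simp only [ContinuousLinearMap.add_apply, ContinuousLinearMap.smul_apply,
    ContinuousLinearMap.smulRight_apply, PiLp.add_apply, PiLp.smul_apply,
    PiLp.proj_apply, smul_eq_mul, Fin.sum_univ_two, W_apply,
    EuclideanSpace.single_apply]
  norm_num
  ring
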